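/- arXiv:2309.06856 — 5 statements merged into one kernel-verified Lean document; each statement's English description precedes it below -/
import Mathlib

section
/- Let a₀, a₁, a₂, a₃, a₄ ∈ ℝ with a₄ ≠ 0, and let λ₁, λ₂, λ₃, λ₄ ∈ ℝ be pairwise distinct with a₀ + a₁·λⱼ + a₂·λⱼ² + a₃·λⱼ³ + a₄·λⱼ⁴ = 0 for each j. Set bⱼ = (−λⱼ, 1) ∈ ℝ × ℝ. Then for every function u : ℝ × ℝ → ℝ of class C⁴ (ContDiff ℝ 4) and every x ∈ ℝ × ℝ, a₀·∂⁴u/∂x₁⁴(x) + a₁·∂⁴u/∂x₁³∂x₂(x) + a₂·∂⁴u/∂x₁²∂x₂²(x) + a₃·∂⁴u/∂x₁∂x₂³(x) + a₄·∂⁴u/∂x₂⁴(x) = a₄ · (D_{b₁}(D_{b₂}(D_{b₃}(D_{b₄} u))))(x), where the fourth-order partial derivatives are given by the fourth iterated Fréchet derivative of u evaluated at the corresponding coordinate directions. -/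
/-- The directional derivative operator along the vector `a`. -/
noncomputable def dirDeriv (a : ℝ × ℝ) (u : ℝ × ℝ → ℝ) : ℝ × ℝ → ℝ :=
  fun x => fderiv ℝ u x a

lemma dd_top (g : ℝ × ℝ → ℝ) (p : ℝ) (x : ℝ × ℝ) :
    dirDeriv (p, 1) g x = p * dirDeriv (1, 0) g x + dirDeriv (0, 1) g x := by
  have h : ((p, 1) : ℝ × ℝ) = p • ((1, 0) : ℝ × ℝ) + ((0, 1) : ℝ × ℝ) := by
    simp [Prod.ext_iff]
  simp only [dirDeriv, h, map_add, map_smul, smul_eq_mul]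

lemma dd_lin {f g : ℝ × ℝ → ℝ} (hf : Differentiable ℝ f) (hg : Differentiable ℝ g)
    (c : ℝ) (v : ℝ × ℝ) (x : ℝ × ℝ) :
    dirDeriv v (fun y => c * f y + g y) x = c * dirDeriv v f x + dirDeriv v g x := by
  unfold dirDeriv
  rw [fderiv_fun_add ((hf x).const_mul c) (hg x), fderiv_const_mul (hf x) c]
  simp

lemma dd_smooth {n : ℕ} {u : ℝ × ℝ → ℝ} (hu : ContDiff ℝ (n + 1 : ℕ) u) (v : ℝ × ℝ) :
    ContDiff ℝ (n : ℕ) (dirDeriv v u) := by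
  have h := hu.fderiv_right (m := (n : ℕ)) (by exact_mod_cast le_rfl)
  exact h.clm_apply contDiff_const

lemma dd_sndd (g : ℝ × ℝ → ℝ) (hg : ContDiff ℝ (2 : ℕ) g) (v w : ℝ × ℝ) (x : ℝ × ℝ) :
    dirDeriv v (dirDeriv w g) x = fderiv ℝ (fderiv ℝ g) x v w := by
  have hd : DifferentiableAt ℝ (fderiv ℝ g) x := by
    have h1 : ContDiff ℝ (1 : ℕ) (fderiv ℝ g) := hg.fderiv_right (by norm_num)
    exact (h1.differentiable (by norm_num)) x
  show fderiv ℝ (fun y => fderiv ℝ g y w) x v = _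
  rw [fderiv_clm_apply hd (differentiableAt_const w)]
  simp

lemma dd_comm {g : ℝ × ℝ → ℝ} (hg : ContDiff ℝ (2 : ℕ) g) (v w : ℝ × ℝ) :
    dirDeriv v (dirDeriv w g) = dirDeriv w (dirDeriv v g) := by
  funext x
  rw [dd_sndd g hg v w x, dd_sndd g hg w v x]
  exact (hg.contDiffAt.isSymmSndFDerivAt (by norm_num)) v w

lemma dd_iter {u : ℝ × ℝ → ℝ} (hu : ContDiff ℝ 4 u) {k : ℕ} (hk : k < 4)
    (v : Fin k → ℝ × ℝ) (b : ℝ × ℝ) (x : ℝ × ℝ) :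
    dirDeriv b (fun y => iteratedFDeriv ℝ k u y v) x
      = iteratedFDeriv ℝ (k + 1) u x (Fin.cons b v) := by
  have hd : DifferentiableAt ℝ (iteratedFDeriv ℝ k u) x :=
    (hu.differentiable_iteratedFDeriv (by exact_mod_cast hk)) x
  show fderiv ℝ (fun y => iteratedFDeriv ℝ k u y v) x b = _
  rw [fderiv_continuousMultilinear_apply_const_apply hd v b]
  rw [iteratedFDeriv_succ_apply_left]
  simp [Fin.tail_cons]

lemma dd_chain4 {u : ℝ × ℝ → ℝ} (hu : ContDiff ℝ 4 u) (v1 v2 v3 v4 : ℝ × ℝ) (x : ℝ × ℝ) :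
    dirDeriv v1 (dirDeriv v2 (dirDeriv v3 (dirDeriv v4 u))) x
      = iteratedFDeriv ℝ 4 u x ![v1, v2, v3, v4] := by
  have s4 : dirDeriv v4 u = fun y => iteratedFDeriv ℝ 1 u y ![v4] := by
    funext y
    simp [dirDeriv, iteratedFDeriv_one_apply]
  have s3 : dirDeriv v3 (dirDeriv v4 u) = fun y => iteratedFDeriv ℝ 2 u y ![v3, v4] := by
    funext y
    rw [s4]
    exact dd_iter hu (by norm_num) ![v4] v3 y
  have s2 : dirDeriv v2 (dirDeriv v3 (dirDeriv v4 u))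
      = fun y => iteratedFDeriv ℝ 3 u y ![v2, v3, v4] := by
    funext y
    rw [s3]
    exact dd_iter hu (by norm_num) ![v3, v4] v2 y
  rw [s2]
  exact dd_iter hu (by norm_num) ![v2, v3, v4] v1 x

/-- **Factorization of the fourth-order hyperbolic operator into first-order
directional derivative operators.**  If the characteristic polynomial
`a₀ + a₁λ + a₂λ² + a₃λ³ + a₄λ⁴` has pairwise distinct real roots `λⱼ`
(and `a₄ ≠ 0`), set `bⱼ = (−λⱼ, 1)`.  Then for every `C⁴` function `u` on the plane,
`L(∂)u = a₄ · D_{b₁} D_{b₂} D_{b₃} D_{b₄} u`, where the fourth-order partial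
derivatives of `u` are given by the fourth iterated Fréchet derivative
evaluated at the coordinate directions `(1,0)` and `(0,1)`. -/
theorem operator_factorization
    (a0 a1 a2 a3 a4 : ℝ) (ha4 : a4 ≠ 0)
    (l1 l2 l3 l4 : ℝ)
    (h12 : l1 ≠ l2) (h13 : l1 ≠ l3) (h14 : l1 ≠ l4)
    (h23 : l2 ≠ l3) (h24 : l2 ≠ l4) (h34 : l3 ≠ l4)
    (hr1 : a0 + a1 * l1 + a2 * l1 ^ 2 + a3 * l1 ^ 3 + a4 * l1 ^ 4 = 0)
    (hr2 : a0 + a1 * l2 + a2 * l2 ^ 2 + a3 * l2 ^ 3 + a4 * l2 ^ 4 = 0)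
    (hr3 : a0 + a1 * l3 + a2 * l3 ^ 2 + a3 * l3 ^ 3 + a4 * l3 ^ 4 = 0)
    (hr4 : a0 + a1 * l4 + a2 * l4 ^ 2 + a3 * l4 ^ 3 + a4 * l4 ^ 4 = 0)
    (u : ℝ × ℝ → ℝ) (hu : ContDiff ℝ 4 u) (x : ℝ × ℝ) :
    a0 * iteratedFDeriv ℝ 4 u x ![((1:ℝ),(0:ℝ)), (1,0), (1,0), (1,0)]
      + a1 * iteratedFDeriv ℝ 4 u x ![((1:ℝ),(0:ℝ)), (1,0), (1,0), (0,1)]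
      + a2 * iteratedFDeriv ℝ 4 u x ![((1:ℝ),(0:ℝ)), (1,0), (0,1), (0,1)]
      + a3 * iteratedFDeriv ℝ 4 u x ![((1:ℝ),(0:ℝ)), (0,1), (0,1), (0,1)]
      + a4 * iteratedFDeriv ℝ 4 u x ![((0:ℝ),(1:ℝ)), (0,1), (0,1), (0,1)]
    = a4 * dirDeriv (-l1, 1) (dirDeriv (-l2, 1) (dirDeriv (-l3, 1)
        (dirDeriv (-l4, 1) u))) x := by
  -- Vieta's formulas from the root equations
  have key12 : a1 + a2*(l1+l2) + a3*(l1^2+l1*l2+l2^2)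
      + a4*(l1^3+l1^2*l2+l1*l2^2+l2^3) = 0 := by
    have h : (l1 - l2) * (a1 + a2*(l1+l2) + a3*(l1^2+l1*l2+l2^2)
        + a4*(l1^3+l1^2*l2+l1*l2^2+l2^3)) = 0 := by linear_combination hr1 - hr2
    exact (mul_eq_zero.1 h).resolve_left (sub_ne_zero.2 h12)
  have key13 : a1 + a2*(l1+l3) + a3*(l1^2+l1*l3+l3^2)
      + a4*(l1^3+l1^2*l3+l1*l3^2+l3^3) = 0 := by
    have h : (l1 - l3) * (a1 + a2*(l1+l3) + a3*(l1^2+l1*l3+l3^2)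
        + a4*(l1^3+l1^2*l3+l1*l3^2+l3^3)) = 0 := by linear_combination hr1 - hr3
    exact (mul_eq_zero.1 h).resolve_left (sub_ne_zero.2 h13)
  have key14 : a1 + a2*(l1+l4) + a3*(l1^2+l1*l4+l4^2)
      + a4*(l1^3+l1^2*l4+l1*l4^2+l4^3) = 0 := by
    have h : (l1 - l4) * (a1 + a2*(l1+l4) + a3*(l1^2+l1*l4+l4^2)
        + a4*(l1^3+l1^2*l4+l1*l4^2+l4^3)) = 0 := by linear_combination hr1 - hr4
    exact (mul_eq_zero.1 h).resolve_left (sub_ne_zero.2 h14)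
  have key123 : a2 + a3*(l1+l2+l3) + a4*(l1^2+l2^2+l3^2+l1*l2+l1*l3+l2*l3) = 0 := by
    have h : (l2 - l3) * (a2 + a3*(l1+l2+l3)
        + a4*(l1^2+l2^2+l3^2+l1*l2+l1*l3+l2*l3)) = 0 := by linear_combination key12 - key13
    exact (mul_eq_zero.1 h).resolve_left (sub_ne_zero.2 h23)
  have key124 : a2 + a3*(l1+l2+l4) + a4*(l1^2+l2^2+l4^2+l1*l2+l1*l4+l2*l4) = 0 := by
    have h : (l2 - l4) * (a2 + a3*(l1+l2+l4)
        + a4*(l1^2+l2^2+l4^2+l1*l2+l1*l4+l2*l4)) = 0 := by linear_combination key12 - key14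
    exact (mul_eq_zero.1 h).resolve_left (sub_ne_zero.2 h24)
  have key1234 : a3 + a4*(l1+l2+l3+l4) = 0 := by
    have h : (l3 - l4) * (a3 + a4*(l1+l2+l3+l4)) = 0 := by
      linear_combination key123 - key124
    exact (mul_eq_zero.1 h).resolve_left (sub_ne_zero.2 h34)
  have va3 : a3 = -a4*(l1+l2+l3+l4) := by linarith
  have va2 : a2 = a4*(l1*l2+l1*l3+l1*l4+l2*l3+l2*l4+l3*l4) := by
    linear_combination key123 - (l1+l2+l3)*key1234
  have va1 : a1 = -a4*(l1*l2*l3+l1*l2*l4+l1*l3*l4+l2*l3*l4) := by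
    linear_combination key12 - (l1+l2)*key123 + (l1*l2+l1*l3+l2*l3)*key1234
  have va0 : a0 = a4*(l1*l2*l3*l4) := by
    linear_combination hr1 - l1*va1 - l1^2*va2 - l1^3*va3
  -- smoothness bookkeeping
  have hu' : ContDiff ℝ ((4 : ℕ) : ℕ∞) u := by exact_mod_cast hu
  have c3 : ∀ v, ContDiff ℝ ((3 : ℕ) : ℕ∞) (dirDeriv v u) := fun v => dd_smooth hu' v
  have c2 : ∀ v w, ContDiff ℝ ((2 : ℕ) : ℕ∞) (dirDeriv v (dirDeriv w u)) :=
    fun v w => dd_smooth (c3 w) v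
  have c1 : ∀ v w z, ContDiff ℝ ((1 : ℕ) : ℕ∞) (dirDeriv v (dirDeriv w (dirDeriv z u))) :=
    fun v w z => dd_smooth (c2 w z) v
  have d3 : ∀ v, Differentiable ℝ (dirDeriv v u) :=
    fun v => (c3 v).differentiable (by simp)
  have d2 : ∀ v w, Differentiable ℝ (dirDeriv v (dirDeriv w u)) :=
    fun v w => (c2 v w).differentiable (by simp)
  have d1 : ∀ v w z, Differentiable ℝ (dirDeriv v (dirDeriv w (dirDeriv z u))) :=
    fun v w z => (c1 v w z).differentiable (by simp)
  have hu2 : ContDiff ℝ ((2 : ℕ) : ℕ∞) u :=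
    hu'.of_le (by exact_mod_cast (by norm_num : (2:ℕ) ≤ 4))
  have c3two : ∀ v, ContDiff ℝ ((2 : ℕ) : ℕ∞) (dirDeriv v u) :=
    fun v => (c3 v).of_le (by exact_mod_cast (by norm_num : (2:ℕ) ≤ 3))
  -- commutation (bubbling a (0,1) past a (1,0))
  have swap_u : dirDeriv (0,1) (dirDeriv ((1:ℝ),(0:ℝ)) u)
      = dirDeriv (1,0) (dirDeriv ((0:ℝ),(1:ℝ)) u) := dd_comm hu2 _ _
  have swap3 : ∀ v, dirDeriv (0,1) (dirDeriv ((1:ℝ),(0:ℝ)) (dirDeriv v u))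
      = dirDeriv (1,0) (dirDeriv ((0:ℝ),(1:ℝ)) (dirDeriv v u)) :=
    fun v => dd_comm (c3two v) _ _
  have swap4 : ∀ v w, dirDeriv (0,1) (dirDeriv ((1:ℝ),(0:ℝ)) (dirDeriv v (dirDeriv w u)))
      = dirDeriv (1,0) (dirDeriv ((0:ℝ),(1:ℝ)) (dirDeriv v (dirDeriv w u))) :=
    fun v w => dd_comm (c2 v w) _ _
  -- multilinear expansion of the directional-derivative chains
  have exp1 : ∀ p : ℝ, dirDeriv (p,1) u
      = fun y => p * dirDeriv (1,0) u y + dirDeriv (0,1) u y :=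
    fun p => funext fun y => dd_top u p y
  have exp2 : ∀ p q : ℝ, dirDeriv (p,1) (dirDeriv (q,1) u)
      = fun y => p*q * dirDeriv (1,0) (dirDeriv (1,0) u) y
        + ((p+q) * dirDeriv (1,0) (dirDeriv (0,1) u) y
          + dirDeriv (0,1) (dirDeriv (0,1) u) y) := by
    intro p q
    funext y
    rw [exp1 q, dd_top _ p y,
      dd_lin (d3 (1,0)) (d3 (0,1)) q (1,0) y,
      dd_lin (d3 (1,0)) (d3 (0,1)) q (0,1) y, swap_u]
    ring
  have exp3 : ∀ p q r : ℝ, dirDeriv (p,1) (dirDeriv (q,1) (dirDeriv (r,1) u))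
      = fun y => p*q*r * dirDeriv (1,0) (dirDeriv (1,0) (dirDeriv (1,0) u)) y
        + ((p*q+p*r+q*r) * dirDeriv (1,0) (dirDeriv (1,0) (dirDeriv (0,1) u)) y
          + ((p+q+r) * dirDeriv (1,0) (dirDeriv (0,1) (dirDeriv (0,1) u)) y
            + dirDeriv (0,1) (dirDeriv (0,1) (dirDeriv (0,1) u)) y)) := by
    intro p q r
    funext y
    have dtail : Differentiable ℝ (fun z =>
        (q+r) * dirDeriv (1,0) (dirDeriv (0,1) u) z + dirDeriv (0,1) (dirDeriv (0,1) u) z) :=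
      ((d2 (1,0) (0,1)).const_mul (q+r)).add (d2 (0,1) (0,1))
    rw [exp2 q r, dd_top _ p y,
      dd_lin (d2 (1,0) (1,0)) dtail (q*r) (1,0) y,
      dd_lin (d2 (1,0) (0,1)) (d2 (0,1) (0,1)) (q+r) (1,0) y,
      dd_lin (d2 (1,0) (1,0)) dtail (q*r) (0,1) y,
      dd_lin (d2 (1,0) (0,1)) (d2 (0,1) (0,1)) (q+r) (0,1) y,
      swap3 (1,0), swap3 (0,1), swap_u]
    ring
  have exp4 : ∀ p q r s : ℝ, ∀ y,
      dirDeriv (p,1) (dirDeriv (q,1) (dirDeriv (r,1) (dirDeriv (s,1) u))) y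
      = p*q*r*s * dirDeriv (1,0) (dirDeriv (1,0) (dirDeriv (1,0) (dirDeriv (1,0) u))) y
        + ((p*q*r+p*q*s+p*r*s+q*r*s)
            * dirDeriv (1,0) (dirDeriv (1,0) (dirDeriv (1,0) (dirDeriv (0,1) u))) y
          + ((p*q+p*r+p*s+q*r+q*s+r*s)
              * dirDeriv (1,0) (dirDeriv (1,0) (dirDeriv (0,1) (dirDeriv (0,1) u))) y
            + ((p+q+r+s)
                * dirDeriv (1,0) (dirDeriv (0,1) (dirDeriv (0,1) (dirDeriv (0,1) u))) y
              + dirDeriv (0,1) (dirDeriv (0,1) (dirDeriv (0,1) (dirDeriv (0,1) u))) y))) := by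
    intro p q r s y
    have dt2 : Differentiable ℝ (fun z =>
        (q+r+s) * dirDeriv (1,0) (dirDeriv (0,1) (dirDeriv (0,1) u)) z
          + dirDeriv (0,1) (dirDeriv (0,1) (dirDeriv (0,1) u)) z) :=
      ((d1 (1,0) (0,1) (0,1)).const_mul _).add (d1 (0,1) (0,1) (0,1))
    have dt1 : Differentiable ℝ (fun z =>
        (q*r+q*s+r*s) * dirDeriv (1,0) (dirDeriv (1,0) (dirDeriv (0,1) u)) z
          + ((q+r+s) * dirDeriv (1,0) (dirDeriv (0,1) (dirDeriv (0,1) u)) z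
            + dirDeriv (0,1) (dirDeriv (0,1) (dirDeriv (0,1) u)) z)) :=
      ((d1 (1,0) (1,0) (0,1)).const_mul _).add dt2
    rw [exp3 q r s, dd_top _ p y,
      dd_lin (d1 (1,0) (1,0) (1,0)) dt1 (q*r*s) (1,0) y,
      dd_lin (d1 (1,0) (1,0) (0,1)) dt2 (q*r+q*s+r*s) (1,0) y,
      dd_lin (d1 (1,0) (0,1) (0,1)) (d1 (0,1) (0,1) (0,1)) (q+r+s) (1,0) y,
      dd_lin (d1 (1,0) (1,0) (1,0)) dt1 (q*r*s) (0,1) y,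
      dd_lin (d1 (1,0) (1,0) (0,1)) dt2 (q*r+q*s+r*s) (0,1) y,
      dd_lin (d1 (1,0) (0,1) (0,1)) (d1 (0,1) (0,1) (0,1)) (q+r+s) (0,1) y,
      swap4 (1,0) (1,0), swap4 (1,0) (0,1), swap4 (0,1) (0,1),
      swap3 (1,0), swap3 (0,1), swap_u]
    ring
  -- convert the iterated Fréchet derivatives on the left to derivative chains
  rw [← dd_chain4 hu (1,0) (1,0) (1,0) (1,0) x,
    ← dd_chain4 hu (1,0) (1,0) (1,0) (0,1) x,
    ← dd_chain4 hu (1,0) (1,0) (0,1) (0,1) x,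
    ← dd_chain4 hu (1,0) (0,1) (0,1) (0,1) x,
    ← dd_chain4 hu (0,1) (0,1) (0,1) (0,1) x,
    exp4 (-l1) (-l2) (-l3) (-l4) x, va0, va1, va2, va3]
  ring
end

section
/- Let a¹, a², a³, a⁴ ∈ ℝ × ℝ and b¹, b², b³, b⁴ ∈ ℝ × ℝ satisfy bʲ·aʲ = 0 for each j = 1, 2, 3, 4. Let C₁, C₂, C₃, C₄ ∈ ℝ and let q ≥ 3 be an integer. Define u : ℝ × ℝ → ℝ by u(x) = Σ_{j=1}^{4} Cⱼ·( (1/(2q))·eval (bʲ·x) (Polynomial.Chebyshev.T ℝ q) − (1/(2(q−2)))·eval (bʲ·x) (Polynomial.Chebyshev.T ℝ (q−2)) ). Then D_{a¹}(D_{a²}(D_{a³}(D_{a⁴} u)))(x) = 0 for every x ∈ ℝ × ℝ, i.e., u solves the homogeneous fourth-order equation whose operator is the composition of the four directional derivatives along a¹, a², a³, a⁴. -/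
open Polynomial

def dot (a b : ℝ × ℝ) : ℝ := a.1 * b.1 + a.2 * b.2

noncomputable def Lb (b : ℝ × ℝ) : (ℝ × ℝ) →L[ℝ] ℝ :=
  b.1 • (ContinuousLinearMap.fst ℝ ℝ ℝ) + b.2 • (ContinuousLinearMap.snd ℝ ℝ ℝ)

lemma Lb_apply (b x : ℝ × ℝ) : Lb b x = dot b x := by
  simp [Lb, dot]

lemma hasFDerivAt_evalDot (b : ℝ × ℝ) (P : ℝ[X]) (x : ℝ × ℝ) :
    HasFDerivAt (fun y => eval (dot b y) P)
      (eval (dot b x) (derivative P) • Lb b) x := by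
  have h2 : HasFDerivAt (fun y => dot b y) (Lb b) x := by
    have := (Lb b).hasFDerivAt (x := x)
    exact this.congr_fderiv rfl |>.congr_of_eventuallyEq
      (Filter.Eventually.of_forall fun y => (Lb_apply b y).symm)
  exact (P.hasDerivAt (dot b x)).comp_hasFDerivAt x h2

lemma dd_sum4 (a b1 b2 b3 b4 : ℝ × ℝ) (Q1 Q2 Q3 Q4 : ℝ[X]) :
    dirDeriv a (fun x => eval (dot b1 x) Q1 + eval (dot b2 x) Q2
      + eval (dot b3 x) Q3 + eval (dot b4 x) Q4)
    = fun x => eval (dot b1 x) (C (dot b1 a) * derivative Q1)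
      + eval (dot b2 x) (C (dot b2 a) * derivative Q2)
      + eval (dot b3 x) (C (dot b3 a) * derivative Q3)
      + eval (dot b4 x) (C (dot b4 a) * derivative Q4) := by
  funext x
  have h := (((hasFDerivAt_evalDot b1 Q1 x).add (hasFDerivAt_evalDot b2 Q2 x)).add
    (hasFDerivAt_evalDot b3 Q3 x)).add (hasFDerivAt_evalDot b4 Q4 x)
  have this : fderiv ℝ (fun x => eval (dot b1 x) Q1 + eval (dot b2 x) Q2
      + eval (dot b3 x) Q3 + eval (dot b4 x) Q4) x = _ := h.fderiv
  simp only [dirDeriv, this]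
  simp [Lb_apply, eval_mul]
  ring

/-- **The Chebyshev combinations of formula (31) solve the homogeneous equation.**
Let `a¹, …, a⁴` and `b¹, …, b⁴` satisfy `bʲ · aʲ = 0`, let `C₁, …, C₄ ∈ ℝ` and
`q ≥ 3` an integer.  Then
`u(x) = Σⱼ Cⱼ ( T_q(bʲ·x)/(2q) − T_{q−2}(bʲ·x)/(2(q−2)) )`
is annihilated by the composition of the directional derivatives along
`a¹, a², a³, a⁴`. -/
theorem chebyshev_combination_solves_homogeneous_equation
    (a1 a2 a3 a4 b1 b2 b3 b4 : ℝ × ℝ)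
    (h1 : dot b1 a1 = 0) (h2 : dot b2 a2 = 0)
    (h3 : dot b3 a3 = 0) (h4 : dot b4 a4 = 0)
    (C1 C2 C3 C4 : ℝ) (q : ℤ) (hq : 3 ≤ q)
    (u : ℝ × ℝ → ℝ)
    (hu : u = fun x : ℝ × ℝ =>
      C1 * ((1 / (2 * (q : ℝ))) * eval (dot b1 x) (Polynomial.Chebyshev.T ℝ q)
        - (1 / (2 * ((q : ℝ) - 2))) * eval (dot b1 x) (Polynomial.Chebyshev.T ℝ (q - 2)))
      + C2 * ((1 / (2 * (q : ℝ))) * eval (dot b2 x) (Polynomial.Chebyshev.T ℝ q)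
        - (1 / (2 * ((q : ℝ) - 2))) * eval (dot b2 x) (Polynomial.Chebyshev.T ℝ (q - 2)))
      + C3 * ((1 / (2 * (q : ℝ))) * eval (dot b3 x) (Polynomial.Chebyshev.T ℝ q)
        - (1 / (2 * ((q : ℝ) - 2))) * eval (dot b3 x) (Polynomial.Chebyshev.T ℝ (q - 2)))
      + C4 * ((1 / (2 * (q : ℝ))) * eval (dot b4 x) (Polynomial.Chebyshev.T ℝ q)
        - (1 / (2 * ((q : ℝ) - 2))) * eval (dot b4 x) (Polynomial.Chebyshev.T ℝ (q - 2)))) :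
    ∀ x : ℝ × ℝ, dirDeriv a1 (dirDeriv a2 (dirDeriv a3 (dirDeriv a4 u))) x = 0 := by
  set Q : ℝ → ℝ[X] := fun c => C c * (C (1 / (2 * (q : ℝ))) * Chebyshev.T ℝ q
    - C (1 / (2 * ((q : ℝ) - 2))) * Chebyshev.T ℝ (q - 2)) with hQ
  have hu' : u = fun x => eval (dot b1 x) (Q C1) + eval (dot b2 x) (Q C2)
      + eval (dot b3 x) (Q C3) + eval (dot b4 x) (Q C4) := by
    rw [hu]; funext x; simp [hQ, eval_mul, eval_sub]
  rw [hu', dd_sum4, dd_sum4, dd_sum4, dd_sum4]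
  intro x
  simp [derivative_C_mul, eval_mul, h1, h2, h3, h4]
end

section
/- Let φ₁, φ₂, φ₃, φ₄ ∈ ℝ, define T_j : ℝ → ℝ by T_j(τ) = 2φ_j − τ, and let T = T₄ ∘ T₃ ∘ T₂ ∘ T₁ be the John mapping. Then the following are equivalent: (i) there exists a positive integer n such that for every τ ∈ ℝ there is an integer m with T^[n](τ) = τ + 2π·m (i.e., every point of the characteristic billiard on the unit circle is periodic); (ii) there exist integers p and q with q ≠ 0 such that φ₄ − φ₃ + φ₂ − φ₁ = π·p/q. -/
open Real

/-- **Periodicity of the characteristic billiard ⇔ rationality condition (30).**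
With the reflections `Tⱼ(τ) = 2φⱼ − τ` and the John mapping `T = T₄ ∘ T₃ ∘ T₂ ∘ T₁`,
every point of the characteristic billiard on the unit circle is periodic (i.e. some
positive iterate of `T` is the identity modulo `2π`) if and only if
`φ₄ − φ₃ + φ₂ − φ₁ = π·p/q` for some integers `p, q` with `q ≠ 0`. -/
theorem john_mapping_periodicity_iff_rational (φ1 φ2 φ3 φ4 : ℝ)
    (T1 T2 T3 T4 T : ℝ → ℝ)
    (hT1 : T1 = fun τ => 2 * φ1 - τ) (hT2 : T2 = fun τ => 2 * φ2 - τ)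
    (hT3 : T3 = fun τ => 2 * φ3 - τ) (hT4 : T4 = fun τ => 2 * φ4 - τ)
    (hT : T = T4 ∘ T3 ∘ T2 ∘ T1) :
    (∃ n : ℕ, 0 < n ∧ ∀ τ : ℝ, ∃ m : ℤ, T^[n] τ = τ + 2 * π * m) ↔
      (∃ p q : ℤ, q ≠ 0 ∧ φ4 - φ3 + φ2 - φ1 = π * p / q) := by
  set δ := φ4 - φ3 + φ2 - φ1 with hδ
  have hTfun : ∀ τ, T τ = τ + 2 * δ := by
    intro τ
    simp [hT, hT1, hT2, hT3, hT4, hδ]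
    ring
  have hiter : ∀ n : ℕ, ∀ τ : ℝ, T^[n] τ = τ + 2 * n * δ := by
    intro n
    induction n with
    | zero => intro τ; simp
    | succ k ih =>
        intro τ
        rw [Function.iterate_succ_apply', ih, hTfun]
        push_cast
        ring
  constructor
  · rintro ⟨n, hn, hper⟩
    obtain ⟨m, hm⟩ := hper 0
    rw [hiter] at hm
    refine ⟨m, (n : ℤ), by exact_mod_cast hn.ne', ?_⟩
    have hn' : (n : ℝ) ≠ 0 := by exact_mod_cast hn.ne'
    field_simp
    push_cast
    nlinarith [hm]
  · rintro ⟨p, q, hq, hpq⟩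
    refine ⟨q.natAbs, by simpa using Int.natAbs_pos.mpr hq, fun τ => ?_⟩
    refine ⟨p * q.sign, ?_⟩
    rw [hiter, hpq]
    have hq' : (q : ℝ) ≠ 0 := by exact_mod_cast hq
    rcases hq.lt_or_gt with h | h
    · have hs : q.sign = -1 := Int.sign_eq_neg_one_of_neg h
      have hna : ((q.natAbs : ℕ) : ℝ) = -(q : ℝ) := by
        rw [Nat.cast_natAbs]; push_cast [abs_of_neg h]; ring
      rw [hs]
      push_cast
      rw [show ((q.natAbs : ℕ) : ℝ) = -(q:ℝ) from hna]
      field_simp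
    · have hs : q.sign = 1 := Int.sign_eq_one_of_pos h
      have hna : ((q.natAbs : ℕ) : ℝ) = (q : ℝ) := by
        rw [Nat.cast_natAbs]; push_cast [abs_of_pos h]; ring
      rw [hs]
      push_cast
      rw [show ((q.natAbs : ℕ) : ℝ) = (q:ℝ) from hna]
      field_simp
end

section
/- Let φ₁, φ₂, φ₃, φ₄ ∈ ℝ, define T_j : ℝ → ℝ by T_j(τ) = 2φ_j − τ, and let T = T₄ ∘ T₃ ∘ T₂ ∘ T₁ be the John mapping. Suppose there exist integers p₁, p₂ and a positive integer q such that φ₂ − φ₁ = π·p₁/q and φ₄ − φ₃ = π·p₂/q. Then for every τ ∈ ℝ, the q-fold iterate satisfies T^[q](τ) = τ + 2π·(p₁ + p₂); in particular every point of the characteristic billiard on the unit circle is periodic (T^[q](τ) ≡ τ modulo 2π). -/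
open Real

/-- **Condition (30) forces periodicity of the characteristic billiard.**
With the reflections `Tⱼ(τ) = 2φⱼ − τ` and the John mapping `T = T₄ ∘ T₃ ∘ T₂ ∘ T₁`,
if `φ₂ − φ₁ = π·p₁/q` and `φ₄ − φ₃ = π·p₂/q` for integers `p₁, p₂` and a positive
integer `q`, then `T^[q](τ) = τ + 2π(p₁ + p₂)` for all `τ`; in particular every point
of the characteristic billiard on the unit circle is periodic. -/
theorem john_mapping_periodic_of_rational (φ1 φ2 φ3 φ4 : ℝ)
    (T1 T2 T3 T4 T : ℝ → ℝ)
    (hT1 : T1 = fun τ => 2 * φ1 - τ) (hT2 : T2 = fun τ => 2 * φ2 - τ)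
    (hT3 : T3 = fun τ => 2 * φ3 - τ) (hT4 : T4 = fun τ => 2 * φ4 - τ)
    (hT : T = T4 ∘ T3 ∘ T2 ∘ T1)
    (p1 p2 : ℤ) (q : ℕ) (hq : 0 < q)
    (h21 : φ2 - φ1 = π * p1 / q) (h43 : φ4 - φ3 = π * p2 / q) :
    ∀ τ : ℝ, T^[q] τ = τ + 2 * π * (p1 + p2) := by
  have hqR : (q : ℝ) ≠ 0 := Nat.cast_ne_zero.mpr hq.ne'
  set c : ℝ := 2 * π * (p1 + p2) / q with hc
  have hTf : ∀ τ, T τ = τ + c := by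
    intro τ
    subst hT hT1 hT2 hT3 hT4
    simp only [Function.comp_apply]
    have : (2:ℝ) * φ4 - (2 * φ3 - (2 * φ2 - (2 * φ1 - τ)))
        = τ + 2 * (φ2 - φ1) + 2 * (φ4 - φ3) := by ring
    rw [this, h21, h43, hc]
    field_simp
    ring
  have key : ∀ n : ℕ, ∀ τ : ℝ, T^[n] τ = τ + n * c := by
    intro n
    induction n with
    | zero => intro τ; simp
    | succ k ih =>
      intro τ
      rw [Function.iterate_succ_apply', ih, hTf]
      push_cast
      ring
  intro τ
  rw [key q τ, hc]
  field_simp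
end

section
/- Let b ∈ ℝ × ℝ with b ≠ 0. For each integer q ≥ 3 define u_q : ℝ × ℝ → ℝ by u_q(x) = (1/(2q))·eval (b·x) (Polynomial.Chebyshev.T ℝ q) − (1/(2(q−2)))·eval (b·x) (Polynomial.Chebyshev.T ℝ (q−2)). Then the family (u_q)_{q ≥ 3} is linearly independent over ℝ in the real vector space of functions ℝ × ℝ → ℝ. -/
open Polynomial

/-- Degree of the Chebyshev polynomial of the first kind. -/
lemma cheb_degree : ∀ n : ℕ, (Polynomial.Chebyshev.T ℝ (n : ℤ)).degree = n := by
  intro n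
  induction n using Nat.strong_induction_on with
  | _ n ih =>
    match n with
    | 0 => simp [Polynomial.Chebyshev.T_zero]
    | 1 => simp [Polynomial.Chebyshev.T_one]
    | (n+2) =>
      have h1 : (Polynomial.Chebyshev.T ℝ ((n+1 : ℕ) : ℤ)).degree = (n+1 : ℕ) :=
        ih (n+1) (by omega)
      have h0 : (Polynomial.Chebyshev.T ℝ ((n : ℕ) : ℤ)).degree = n := ih n (by omega)
      have hcast : ((n+2 : ℕ) : ℤ) = ((n : ℕ) : ℤ) + 2 := by push_cast; ring
      rw [hcast, Polynomial.Chebyshev.T_add_two]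
      have h2deg : (2 : ℝ[X]).degree = 0 := by
        rw [(map_ofNat Polynomial.C 2).symm, Polynomial.degree_C (by norm_num : (2:ℝ) ≠ 0)]
      have hXT : (2 * X * Polynomial.Chebyshev.T ℝ ((n : ℤ) + 1)).degree
          = ((n+2 : ℕ) : WithBot ℕ) := by
        have hc : ((n:ℤ)+1) = ((n+1:ℕ):ℤ) := by push_cast; ring
        rw [hc, Polynomial.degree_mul, Polynomial.degree_mul, h1, Polynomial.degree_X, h2deg]
        push_cast
        ring
      have hlt : (Polynomial.Chebyshev.T ℝ ((n : ℕ) : ℤ)).degree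
          < (2 * X * Polynomial.Chebyshev.T ℝ ((n : ℤ) + 1)).degree := by
        rw [hXT, h0]
        exact_mod_cast Nat.lt_succ_of_lt (Nat.lt_succ_self n)
      rw [Polynomial.degree_sub_eq_left_of_degree_lt hlt, hXT]

/-- Polynomials of pairwise distinct degrees are linearly independent. -/
lemma linearIndependent_of_degree_eq (v : ℕ → ℝ[X]) (hv : ∀ n, (v n).degree = n) :
    LinearIndependent ℝ v := by
  rw [linearIndependent_iff']
  intro s
  induction s using Finset.strongInduction with
  | _ s ih =>
    intro g hg i hi
    have hne : s.Nonempty := ⟨i, hi⟩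
    set m := s.max' hne with hm
    have hgm : g m = 0 := by
      have hc := congrArg (fun p => p.coeff m) hg
      simp only [Polynomial.finset_sum_coeff, Polynomial.coeff_smul, smul_eq_mul,
        Polynomial.coeff_zero] at hc
      rw [Finset.sum_eq_single m] at hc
      · have hcm : (v m).coeff m ≠ 0 := Polynomial.coeff_ne_zero_of_eq_degree (hv m)
        exact (mul_eq_zero.mp hc).resolve_right hcm
      · intro j hj hjm
        have hjlt : j < m := lt_of_le_of_ne (Finset.le_max' s j hj) hjm
        rw [Polynomial.coeff_eq_zero_of_degree_lt (by rw [hv j]; exact_mod_cast hjlt), mul_zero]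
      · intro h; exact absurd (s.max'_mem hne) h
    have hrest : ∑ j ∈ s.erase m, g j • v j = 0 := by
      have h2 := Finset.add_sum_erase s (fun j => g j • v j) (s.max'_mem hne)
      simp only [← hm] at h2
      have h3 : g m • v m + ∑ j ∈ s.erase m, g j • v j = 0 := h2.trans hg
      rw [hgm, zero_smul, zero_add] at h3
      exact h3
    rcases eq_or_ne i m with rfl | him
    · exact hgm
    · exact ih (s.erase m) (Finset.erase_ssubset (s.max'_mem hne)) g hrest i
        (Finset.mem_erase.mpr ⟨him, hi⟩)

/-- **Linear independence of the family (31).**  For a nonzero vector `b` of the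
plane, the functions `u_q(x) = T_q(b·x)/(2q) − T_{q−2}(b·x)/(2(q−2))`, `q ≥ 3`,
are linearly independent over `ℝ` in the space of functions `ℝ × ℝ → ℝ`. -/
theorem chebyshev_combination_linearIndependent (b : ℝ × ℝ) (hb : b ≠ 0) :
    LinearIndependent ℝ (fun q : {q : ℕ // 3 ≤ q} => (fun x : ℝ × ℝ =>
      (1 / (2 * (q : ℕ) : ℝ)) * eval (dot b x) (Polynomial.Chebyshev.T ℝ (q : ℕ))
        - (1 / (2 * ((q : ℕ) - 2) : ℝ))
            * eval (dot b x) (Polynomial.Chebyshev.T ℝ ((q : ℕ) - 2)))) := by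
  classical
  set E : ℝ[X] →ₗ[ℝ] ((ℝ × ℝ) → ℝ) :=
    LinearMap.pi (fun x : ℝ × ℝ => Polynomial.leval (dot b x)) with hEdef
  have hsurj : Function.Surjective (dot b) := by
    intro t
    by_cases h1 : b.1 = 0
    · have h2 : b.2 ≠ 0 := fun h2 => hb (Prod.ext h1 h2)
      refine ⟨(0, t / b.2), ?_⟩
      simp only [dot]
      field_simp
      simp
    · refine ⟨(t / b.1, 0), ?_⟩
      simp only [dot]
      field_simp
      simp
  have hE : Function.Injective E := by
    rw [← LinearMap.ker_eq_bot, LinearMap.ker_eq_bot']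
    intro p hp
    apply Polynomial.zero_of_eval_zero
    intro t
    obtain ⟨x, hx⟩ := hsurj t
    have := congrFun hp x
    simpa [hEdef, LinearMap.pi_apply, Polynomial.leval_apply, hx] using this
  set V : ℕ → ℝ[X] := fun n =>
    if h : 3 ≤ n then
      (1 / (2 * (n : ℝ))) • Polynomial.Chebyshev.T ℝ (n : ℤ)
        - (1 / (2 * ((n : ℝ) - 2))) • Polynomial.Chebyshev.T ℝ ((n : ℤ) - 2)
    else X ^ n with hVdef
  have hVdeg : ∀ n, (V n).degree = n := by
    intro n
    by_cases h : 3 ≤ n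
    · have hidx : ((n : ℤ) - 2) = ((n - 2 : ℕ) : ℤ) := by omega
      have hn0 : (0:ℝ) < (n : ℝ) := by
        have : 0 < n := by omega
        exact_mod_cast this
      have hpos : (0:ℝ) < (n : ℝ) - 2 := by
        have : (3:ℝ) ≤ (n : ℝ) := by exact_mod_cast h
        linarith
      have hd1 : ((1 / (2 * (n : ℝ))) • Polynomial.Chebyshev.T ℝ (n : ℤ)).degree = n := by
        rw [Polynomial.smul_eq_C_mul,
          Polynomial.degree_C_mul (by positivity : (1 : ℝ) / (2 * (n : ℝ)) ≠ 0)]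
        exact cheb_degree n
      have hd2 : ((1 / (2 * ((n : ℝ) - 2))) • Polynomial.Chebyshev.T ℝ ((n : ℤ) - 2)).degree
          = ((n - 2 : ℕ) : WithBot ℕ) := by
        rw [Polynomial.smul_eq_C_mul,
          Polynomial.degree_C_mul (by positivity : (1 : ℝ) / (2 * ((n : ℝ) - 2)) ≠ 0), hidx]
        exact cheb_degree (n - 2)
      have hlt : ((1 / (2 * ((n : ℝ) - 2))) • Polynomial.Chebyshev.T ℝ ((n : ℤ) - 2)).degree
          < ((1 / (2 * (n : ℝ))) • Polynomial.Chebyshev.T ℝ (n : ℤ)).degree := by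
        rw [hd1, hd2]
        exact_mod_cast (by omega : n - 2 < n)
      simp only [hVdef, dif_pos h]
      rw [Polynomial.degree_sub_eq_left_of_degree_lt hlt, hd1]
    · simp only [hVdef, dif_neg h]
      exact Polynomial.degree_X_pow n
  have hVli : LinearIndependent ℝ V := linearIndependent_of_degree_eq V hVdeg
  have hcomp : LinearIndependent ℝ (fun q : {q : ℕ // 3 ≤ q} => E (V (q : ℕ))) :=
    (hVli.map' E (LinearMap.ker_eq_bot.mpr hE)).comp
      (fun q : {q : ℕ // 3 ≤ q} => (q : ℕ)) Subtype.val_injective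
  have hfun : (fun q : {q : ℕ // 3 ≤ q} => (fun x : ℝ × ℝ =>
      (1 / (2 * (q : ℕ) : ℝ)) * eval (dot b x) (Polynomial.Chebyshev.T ℝ (q : ℕ))
        - (1 / (2 * ((q : ℕ) - 2) : ℝ))
            * eval (dot b x) (Polynomial.Chebyshev.T ℝ ((q : ℕ) - 2))))
      = fun q : {q : ℕ // 3 ≤ q} => E (V (q : ℕ)) := by
    funext q
    funext x
    simp only [hEdef, hVdef, dif_pos q.2, LinearMap.pi_apply, Polynomial.leval_apply,
      Polynomial.eval_sub, Polynomial.eval_smul, smul_eq_mul]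
  rw [hfun]
  exact hcomp
end
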